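/- arXiv:2307.06772 — 7 statements merged into one kernel-verified Lean document; each statement's English description precedes it below -/
import Mathlib

section
/- Let v be the first vertex of the path P satisfying the cover condition. Then C* := Partition(v) ∩ P_{⪯v} is a minimum weight vertex cover of the subpath P_{⪯v}. -/
open Finset

/-- `C` is a vertex cover of the subpath of the path `P = (v_0, …, v_{n-1})`
induced by the vertices `v_lo, v_{lo+1}, …, v_{hi-1}` (half-open interval `[lo, hi)`);
the edges of this subpath are `{v_i, v_{i+1}}` for `lo ≤ i` and `i + 1 < hi`. -/
def IsCoverOn (lo hi : ℕ) (C : Finset ℕ) : Prop :=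
  (∀ j ∈ C, lo ≤ j ∧ j < hi) ∧ ∀ i : ℕ, lo ≤ i → i + 1 < hi → (i ∈ C ∨ i + 1 ∈ C)

/-- The total weight `ω(C) = ∑_{v ∈ C} ω(v)` of a set of vertices. -/
def wsum (ω : ℕ → ℝ) (C : Finset ℕ) : ℝ := ∑ j ∈ C, ω j

/-- `C` is a minimum weight vertex cover (MWVC) of the subpath on the vertices `[lo, hi)`. -/
def IsMWVCOn (ω : ℕ → ℝ) (lo hi : ℕ) (C : Finset ℕ) : Prop :=
  IsCoverOn lo hi C ∧ ∀ D : Finset ℕ, IsCoverOn lo hi D → wsum ω C ≤ wsum ω D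

/-- `Partition(v_l) ∩ P_{⪯ v_l}`: the vertices up to (and including) `v_l` lying on the
same side of the path's bipartition as `v_l`. -/
def sameSide (l : ℕ) : Finset ℕ := (range (l + 1)).filter fun j => j % 2 = l % 2

/-- `P_{⪯ v_l} ∖ Partition(v_l)`: the vertices up to `v_l` on the opposite side. -/
def otherSide (l : ℕ) : Finset ℕ := (range (l + 1)).filter fun j => j % 2 ≠ l % 2

/-- `v_l` satisfies the (weak) cover condition. -/
def CoverCond (ω : ℕ → ℝ) (l : ℕ) : Prop := wsum ω (sameSide l) ≤ wsum ω (otherSide l)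

/-- `v_l` satisfies the strict cover condition. -/
def StrictCoverCond (ω : ℕ → ℝ) (l : ℕ) : Prop := wsum ω (sameSide l) < wsum ω (otherSide l)

lemma sameSide_zero : sameSide 0 = {0} := by
  ext x; simp only [sameSide, mem_filter, mem_range, mem_singleton]; omega
lemma otherSide_zero : otherSide 0 = ∅ := by
  ext x; simp only [otherSide, mem_filter, mem_range, notMem_empty, iff_false]; omega
lemma sameSide_succ (j : ℕ) : sameSide (j+1) = insert (j+1) (otherSide j) := by
  ext x; simp only [sameSide, otherSide, mem_insert, mem_filter, mem_range]; omega
lemma otherSide_succ (j : ℕ) : otherSide (j+1) = sameSide j := by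
  ext x; simp only [sameSide, otherSide, mem_filter, mem_range]; omega
lemma wsum_sameSide_succ (ω : ℕ → ℝ) (j : ℕ) :
    wsum ω (sameSide (j+1)) = ω (j+1) + wsum ω (otherSide j) := by
  rw [sameSide_succ, wsum, Finset.sum_insert (by simp [otherSide, mem_filter, mem_range])]
  rfl

lemma cover_empty (D : Finset ℕ) (hD : IsCoverOn 0 1 D) (h0 : 0 ∉ D) : D = ∅ := by
  rw [Finset.eq_empty_iff_forall_notMem]
  intro x hx
  have := hD.1 x hx
  have : x = 0 := by omega
  exact h0 (this ▸ hx)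

lemma cover_zero (D : Finset ℕ) (hD : IsCoverOn 0 1 D) (h0 : 0 ∈ D) : D = {0} := by
  ext x
  simp only [mem_singleton]
  constructor
  · intro hx; have := hD.1 x hx; omega
  · rintro rfl; exact h0

lemma key (ω : ℕ → ℝ) (l : ℕ) (hfirst : ∀ j, j < l → ¬ CoverCond ω j) :
    ∀ j, j ≤ l → ∀ D : Finset ℕ, IsCoverOn 0 (j+1) D →
      (j ∈ D → wsum ω (sameSide j) ≤ wsum ω D) ∧
      (j < l → wsum ω (otherSide j) ≤ wsum ω D) := by
  intro j
  induction j using Nat.strong_induction_on with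
  | _ j ih =>
    intro hjl D hD
    have ha : j ∈ D → wsum ω (sameSide j) ≤ wsum ω D := by
      intro hjD
      have hsum : ω j + wsum ω (D.erase j) = wsum ω D :=
        Finset.add_sum_erase D ω hjD
      cases j with
      | zero =>
        have hE : IsCoverOn 0 1 (D.erase 0) := by
          constructor
          · intro x hx
            have hx' := Finset.mem_of_mem_erase hx
            have := hD.1 x hx'
            have hne := Finset.ne_of_mem_erase hx
            omega
          · intro i _ hi; omega
        -- erase 0 is a cover of [0,1) not containing 0, hence empty
        have : D.erase 0 = ∅ := cover_empty _ hE (Finset.notMem_erase _ _)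
        have hz : wsum ω (D.erase 0) = 0 := by rw [this]; rfl
        have hs : wsum ω (sameSide 0) = ω 0 := by rw [sameSide_zero]; simp [wsum]
        linarith
      | succ k =>
        have hE : IsCoverOn 0 (k+1) (D.erase (k+1)) := by
          constructor
          · intro x hx
            have hx' := Finset.mem_of_mem_erase hx
            have := hD.1 x hx'
            have hne := Finset.ne_of_mem_erase hx
            omega
          · intro i h0 hi
            have := hD.2 i h0 (by omega)
            rcases this with h | h
            · exact Or.inl (Finset.mem_erase.mpr ⟨by omega, h⟩)
            · exact Or.inr (Finset.mem_erase.mpr ⟨by omega, h⟩)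
        have hb := (ih k (by omega) (by omega) _ hE).2 (by omega)
        rw [wsum_sameSide_succ]
        linarith
    refine ⟨ha, ?_⟩
    intro hjl'
    by_cases hjD : j ∈ D
    · have h1 := ha hjD
      have h2 : ¬ CoverCond ω j := hfirst j hjl'
      rw [CoverCond, not_le] at h2
      linarith
    · cases j with
      | zero =>
        have : D = ∅ := cover_empty _ hD hjD
        rw [otherSide_zero, this]
      | succ k =>
        have hk : k ∈ D := by
          rcases hD.2 k (by omega) (by omega) with h | h
          · exact h
          · exact absurd h hjD
        have hE : IsCoverOn 0 (k+1) D := by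
          constructor
          · intro x hx
            have := hD.1 x hx
            have : x ≠ k + 1 := fun h => hjD (h ▸ hx)
            have := hD.1 x hx
            omega
          · intro i h0 hi; exact hD.2 i h0 (by omega)
        have := (ih k (by omega) (by omega) D hE).1 hk
        rw [otherSide_succ]
        exact this

/-- If `v_l` is the first vertex of the path satisfying the cover
condition, then `Partition(v_l) ∩ P_{⪯ v_l}` is a MWVC of the subpath `P_{⪯ v_l}`. -/
theorem stmt_0 (n l : ℕ) (ω : ℕ → ℝ) (hl : l < n)
    (hcc : CoverCond ω l) (hfirst : ∀ j, j < l → ¬ CoverCond ω j) :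
    IsMWVCOn ω 0 (l + 1) (sameSide l) := by
  constructor
  · constructor
    · intro j hj
      simp only [sameSide, mem_filter, mem_range] at hj
      omega
    · intro i _ hi
      by_cases hp : i % 2 = l % 2
      · exact Or.inl (by simp only [sameSide, mem_filter, mem_range]; omega)
      · exact Or.inr (by simp only [sameSide, mem_filter, mem_range]; omega)
  · intro D hD
    by_cases hlD : l ∈ D
    · exact (key ω l hfirst l le_rfl D hD).1 hlD
    · cases l with
      | zero =>
        have hempty : D = ∅ := cover_empty _ hD hlD
        have h0 : wsum ω D = 0 := by rw [hempty]; rfl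
        have := hcc
        rw [CoverCond, otherSide_zero] at this
        have hz : wsum ω (∅ : Finset ℕ) = 0 := rfl
        linarith
      | succ k =>
        have hk : k ∈ D := by
          rcases hD.2 k (by omega) (by omega) with h | h
          · exact h
          · exact absurd h hlD
        have hE : IsCoverOn 0 (k+1) D := by
          constructor
          · intro x hx
            have := hD.1 x hx
            have : x ≠ k + 1 := fun h => hlD (h ▸ hx)
            have := hD.1 x hx
            omega
          · intro i h0 hi; exact hD.2 i h0 (by omega)
        have h1 := (key ω (k+1) hfirst k (by omega) D hE).1 hk
        have h2 := hcc
        rw [CoverCond, otherSide_succ] at h2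
        linarith
end

section
/- Let v be the first vertex of the path P satisfying the cover condition, and suppose v satisfies the strict cover condition. Then C* := Partition(v) ∩ P_{⪯v} is the unique minimum weight vertex cover of the subpath P_{⪯v}. -/
open Finset

noncomputable def tt (ω : ℕ → ℝ) : ℕ → ℝ
  | 0 => 0
  | (k+1) => ω k - tt ω k

lemma tt_pair (ω : ℕ → ℝ) (j : ℕ) : ω j = tt ω j + tt ω (j+1) := by
  simp [tt]

lemma tt_eq (ω : ℕ → ℝ) : ∀ j, tt ω (j+1) = wsum ω (sameSide j) - wsum ω (otherSide j) := by
  intro j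
  induction j with
  | zero => simp [tt, wsum, sameSide_zero, otherSide_zero]
  | succ j ih =>
    have hnm : j + 1 ∉ otherSide j := by
      simp [otherSide, mem_filter, mem_range]
    rw [sameSide_succ, otherSide_succ, wsum, sum_insert hnm]
    have : tt ω (j+1+1) = ω (j+1) - tt ω (j+1) := by simp [tt]
    rw [this, ih]
    simp only [wsum]
    ring

lemma wsum_otherSide (ω : ℕ → ℝ) : ∀ j, wsum ω (otherSide j) = ∑ k ∈ range (j+1), tt ω k := by
  intro j
  induction j with
  | zero => simp [otherSide_zero, wsum, tt]
  | succ j ih =>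
    rw [otherSide_succ]
    have h1 := tt_eq ω j
    have h2 : wsum ω (sameSide j) = wsum ω (otherSide j) + tt ω (j+1) := by linarith
    rw [h2, ih, sum_range_succ (tt ω) (j+1)]

lemma wsum_sameSide (ω : ℕ → ℝ) (l : ℕ) :
    wsum ω (sameSide l) = ∑ k ∈ range (l+2), tt ω k := by
  have h1 := tt_eq ω l
  have h2 := wsum_otherSide ω l
  have : (l+2) = (l+1)+1 := rfl
  rw [this, sum_range_succ, ← h2]
  linarith

lemma decomp (ω : ℕ → ℝ) (D : Finset ℕ) :
    wsum ω D = wsum (tt ω) (D ∪ D.image (· + 1)) + wsum (tt ω) (D ∩ D.image (· + 1)) := by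
  simp only [wsum]
  rw [sum_union_inter]
  have himg : ∑ j ∈ D.image (· + 1), tt ω j = ∑ j ∈ D, tt ω (j+1) := by
    rw [sum_image (by intro a _ b _ (h : a + 1 = b + 1); omega)]
  rw [himg, ← sum_add_distrib]
  exact sum_congr rfl fun j _ => tt_pair ω j

lemma eq_same (l : ℕ) (D : Finset ℕ) (hcov : IsCoverOn 0 (l+1) D)
    (hl : l ∈ D) (hemp : D ∩ D.image (· + 1) = ∅) : D = sameSide l := by
  have key : ∀ d, d ≤ l → ((l - d) ∈ D ↔ d % 2 = 0) := by
    intro d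
    induction d with
    | zero => intro _; simpa using hl
    | succ d ih =>
      intro hdl
      have ihd := ih (by omega)
      have hj1 : l - (d+1) + 1 = l - d := by omega
      by_cases hpar : d % 2 = 0
      · have hmem : l - d ∈ D := ihd.mpr hpar
        constructor
        · intro hmem2
          exfalso
          have : l - d ∈ D ∩ D.image (· + 1) := by
            rw [mem_inter]
            exact ⟨hmem, mem_image.mpr ⟨l - (d+1), hmem2, hj1⟩⟩
          rw [hemp] at this
          exact notMem_empty _ this
        · omega
      · have hnm : l - d ∉ D := fun h => hpar (ihd.mp h)
        have hc := hcov.2 (l - (d+1)) (Nat.zero_le _) (by omega)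
        rw [hj1] at hc
        constructor
        · intro _; omega
        · intro _; tauto
  ext j
  simp only [sameSide, mem_filter, mem_range, Nat.lt_succ_iff]
  constructor
  · intro hj
    have hjl : j ≤ l := by have := (hcov.1 j hj).2; omega
    have := (key (l - j) (by omega)).mp (by rwa [Nat.sub_sub_self hjl])
    exact ⟨hjl, by omega⟩
  · rintro ⟨hjl, hpar⟩
    have := (key (l - j) (by omega)).mpr (by omega)
    rwa [Nat.sub_sub_self hjl] at this

lemma main_lt (l : ℕ) (ω : ℕ → ℝ)
    (hpos : ∀ k, 1 ≤ k → k ≤ l → 0 < tt ω k)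
    (hneg : tt ω (l+1) < 0)
    (D : Finset ℕ) (hcov : IsCoverOn 0 (l+1) D) (hne : D ≠ sameSide l) :
    wsum ω (sameSide l) < wsum ω D := by
  set U := D ∪ D.image (· + 1) with hUdef
  set I := D ∩ D.image (· + 1) with hIdef
  have hDle : ∀ j ∈ D, j ≤ l := fun j hj => by have := (hcov.1 j hj).2; omega
  have hIccU : Icc 1 l ⊆ U := by
    intro k hk
    rw [mem_Icc] at hk
    rcases hcov.2 (k-1) (Nat.zero_le _) (by omega) with h | h
    · rw [hUdef, mem_union]
      exact Or.inr (mem_image.mpr ⟨k-1, h, by omega⟩)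
    · rw [hUdef, mem_union]
      exact Or.inl (by rwa [show k - 1 + 1 = k by omega] at h)
  have hIpos : ∀ k ∈ I, 0 < tt ω k := by
    intro k hk
    rw [hIdef, mem_inter] at hk
    obtain ⟨a, ha, hak⟩ := mem_image.mp hk.2
    exact hpos k (by omega) (hDle k hk.1)
  have hInonneg : 0 ≤ wsum (tt ω) I := sum_nonneg fun k hk => (hIpos k hk).le
  have hIccsum : wsum ω (sameSide l) = (∑ k ∈ Icc 1 l, tt ω k) + tt ω (l+1) := by
    rw [wsum_sameSide]
    have h1 : (∑ k ∈ range (l+1), tt ω k) = ∑ k ∈ Icc 1 l, tt ω k := by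
      refine (sum_subset ?_ ?_).symm
      · intro x hx; rw [mem_Icc] at hx; rw [mem_range]; omega
      · intro x hx hxn
        rw [mem_range] at hx; rw [mem_Icc] at hxn
        have : x = 0 := by omega
        simp [this, tt]
    rw [show l + 2 = (l+1)+1 from rfl, sum_range_succ, h1]
  rw [decomp ω D, ← hUdef, ← hIdef]
  by_cases hlD : l ∈ D
  · -- l ∈ D
    have hAU : insert (l+1) (Icc 1 l) ⊆ U := by
      intro x hx
      rcases mem_insert.mp hx with h | h
      · rw [hUdef, mem_union]
        exact Or.inr (mem_image.mpr ⟨l, hlD, by omega⟩)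
      · exact hIccU h
    have hsumU : wsum (tt ω) U = (∑ k ∈ Icc 1 l, tt ω k) + tt ω (l+1) := by
      rw [wsum, ← sum_subset hAU ?_]
      · rw [sum_insert (by rw [mem_Icc]; omega)]
        ring
      · intro x hxU hxA
        rw [hUdef, mem_union] at hxU
        have hxle : x ≤ l + 1 := by
          rcases hxU with h | h
          · exact le_trans (hDle x h) (by omega)
          · obtain ⟨a, ha, hax⟩ := mem_image.mp h
            have := hDle a ha; omega
        rw [mem_insert, mem_Icc] at hxA
        have : x = 0 := by omega
        simp [this, tt]
    have hInonempty : I.Nonempty := by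
      rcases I.eq_empty_or_nonempty with h | h
      · exact absurd (eq_same l D hcov hlD h) hne
      · exact h
    have hIlt : 0 < wsum (tt ω) I := sum_pos hIpos hInonempty
    rw [hsumU, hIccsum]
    linarith
  · -- l ∉ D
    have hUsub : U ⊆ insert 0 (Icc 1 l) := by
      intro x hx
      rw [hUdef, mem_union] at hx
      have hxle : x ≤ l := by
        rcases hx with h | h
        · exact hDle x h
        · obtain ⟨a, ha, hax⟩ := mem_image.mp h
          have hal := hDle a ha
          have : a ≠ l := fun hh => hlD (hh ▸ ha)
          omega
      rw [mem_insert, mem_Icc]; omega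
    have hsumU : wsum (tt ω) U = ∑ k ∈ Icc 1 l, tt ω k := by
      have h1 : wsum (tt ω) U = ∑ k ∈ insert 0 (Icc 1 l), tt ω k := by
        rw [wsum]
        refine sum_subset hUsub ?_
        intro x hx hxU
        rcases mem_insert.mp hx with h | h
        · simp [h, tt]
        · exact absurd (hIccU h) hxU
      rw [h1, sum_insert (by rw [mem_Icc]; omega)]
      simp [tt]
    rw [hsumU, hIccsum]
    linarith

/-- If `v_l` is the first vertex of the path satisfying the cover condition
and it satisfies the strict cover condition, then `Partition(v_l) ∩ P_{⪯ v_l}` is the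
unique MWVC of the subpath `P_{⪯ v_l}`. -/
theorem stmt_2 (n l : ℕ) (ω : ℕ → ℝ) (hl : l < n)
    (hcc : CoverCond ω l) (hfirst : ∀ j, j < l → ¬ CoverCond ω j)
    (hstrict : StrictCoverCond ω l) :
    IsMWVCOn ω 0 (l + 1) (sameSide l) ∧
      ∀ C : Finset ℕ, IsMWVCOn ω 0 (l + 1) C → C = sameSide l := by
  have hpos : ∀ k, 1 ≤ k → k ≤ l → 0 < tt ω k := by
    intro k h1 h2
    obtain ⟨j, rfl⟩ : ∃ j, k = j + 1 := ⟨k - 1, by omega⟩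
    have hj := hfirst j (by omega)
    rw [CoverCond, not_le] at hj
    rw [tt_eq]
    linarith
  have hneg : tt ω (l+1) < 0 := by
    rw [tt_eq]
    rw [StrictCoverCond] at hstrict
    linarith
  have hcovC : IsCoverOn 0 (l + 1) (sameSide l) := by
    constructor
    · intro j hj
      simp only [sameSide, mem_filter, mem_range] at hj
      exact ⟨Nat.zero_le _, hj.1⟩
    · intro i _ h2
      simp only [sameSide, mem_filter, mem_range]
      omega
  have key : ∀ D : Finset ℕ, IsCoverOn 0 (l+1) D → wsum ω (sameSide l) ≤ wsum ω D := by
    intro D hD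
    by_cases h : D = sameSide l
    · rw [h]
    · exact (main_lt l ω hpos hneg D hD h).le
  refine ⟨⟨hcovC, key⟩, ?_⟩
  intro C hC
  by_contra hne
  have h1 := main_lt l ω hpos hneg C hC.1 hne
  have h2 := hC.2 (sameSide l) hcovC
  linarith
end

section
/- Let C be a vertex cover of the path P containing two adjacent vertices, and let v_a, v_{a+1} be the first such pair, i.e., v_a, v_{a+1} ∈ C and C ∩ {v_1, …, v_a} contains no two adjacent vertices. If v_a does not satisfy the cover condition, then C' := (P_{≺v_a} ∩ Partition(v_{a+1})) ∪ {u ∈ C : v_{a+1} ⪯ u} is a vertex cover of P with ω(C') < ω(C); in particular, C is not a minimum weight vertex cover of P. -/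
open Finset

/-- Let `C` be a vertex cover of the path containing the adjacent pair
`v_a, v_{a+1}` as its first adjacent pair. If `v_a` does not satisfy the cover condition,
then `C' := (P_{≺ v_a} ∩ Partition(v_{a+1})) ∪ {u ∈ C : v_{a+1} ⪯ u}` is a vertex cover of
the path which is strictly cheaper than `C`; in particular `C` is not a MWVC. -/
theorem stmt_5 (n a : ℕ) (ω : ℕ → ℝ) (C : Finset ℕ)
    (hC : IsCoverOn 0 n C)
    (ha : a + 1 < n) (haC : a ∈ C) (ha1C : a + 1 ∈ C)
    (hfirst : ∀ i : ℕ, i + 1 ≤ a → ¬ (i ∈ C ∧ i + 1 ∈ C))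
    (hncc : ¬ CoverCond ω a) :
    IsCoverOn 0 n
        ((range a).filter (fun j => j % 2 = (a + 1) % 2) ∪ C.filter (fun u => a + 1 ≤ u)) ∧
      wsum ω
        ((range a).filter (fun j => j % 2 = (a + 1) % 2) ∪ C.filter (fun u => a + 1 ≤ u)) <
        wsum ω C ∧
      ¬ IsMWVCOn ω 0 n C := by
  obtain ⟨hCb, hCe⟩ := hC
  set A : Finset ℕ := (range a).filter (fun j => j % 2 = (a + 1) % 2) with hAdef
  set B : Finset ℕ := C.filter (fun u => a + 1 ≤ u) with hBdef
  have key : ∀ d, d ≤ a → ((a - d) ∈ C ↔ d % 2 = 0) := by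
    intro d
    induction d with
    | zero => simpa using haC
    | succ d ih =>
      intro hd
      have ih' := ih (by omega)
      have hsub : a - d = (a - (d + 1)) + 1 := by omega
      rcases Nat.even_or_odd d with he | ho
      · have hd0 : d % 2 = 0 := Nat.even_iff.mp he
        have hin : a - d ∈ C := ih'.mpr hd0
        have hnot := hfirst (a - (d + 1)) (by omega)
        rw [← hsub] at hnot
        constructor
        · intro h; exact absurd ⟨h, hin⟩ hnot
        · intro h; omega
      · have hd1 : d % 2 = 1 := Nat.odd_iff.mp ho
        have hnin : a - d ∉ C := fun h => by have := ih'.mp h; omega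
        have hcov := hCe (a - (d + 1)) (Nat.zero_le _) (by omega)
        rw [← hsub] at hcov
        constructor
        · intro _; omega
        · intro _; rcases hcov with h | h
          · exact h
          · exact absurd h hnin
  have hmemC : ∀ j, j ≤ a → (j ∈ C ↔ j % 2 = a % 2) := by
    intro j hj
    have := key (a - j) (by omega)
    rw [Nat.sub_sub_self hj] at this
    rw [this]; omega
  have hA_eq : A = otherSide a := by
    ext j
    simp only [hAdef, otherSide, mem_filter, mem_range]
    omega
  have hClow : C.filter (fun u => u ≤ a) = sameSide a := by
    ext j
    simp only [sameSide, mem_filter, mem_range]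
    constructor
    · rintro ⟨hj, hja⟩; exact ⟨by omega, (hmemC j hja).mp hj⟩
    · rintro ⟨hj, hp⟩
      have hja : j ≤ a := by omega
      exact ⟨(hmemC j hja).mpr hp, hja⟩
  have hCsplit : C = C.filter (fun u => u ≤ a) ∪ B := by
    ext j
    simp only [hBdef, mem_union, mem_filter]
    constructor
    · intro hj; rcases le_or_gt j a with h | h
      · exact Or.inl ⟨hj, h⟩
      · exact Or.inr ⟨hj, by omega⟩
    · rintro (⟨h, _⟩ | ⟨h, _⟩) <;> exact h
  have hdisj1 : Disjoint (C.filter (fun u => u ≤ a)) B := by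
    rw [Finset.disjoint_left]
    intro j hj hj'
    simp only [hBdef, mem_filter] at hj hj'
    omega
  have hdisjAB : Disjoint A B := by
    rw [Finset.disjoint_left]
    intro j hj hj'
    simp only [hAdef, hBdef, mem_filter, mem_range] at hj hj'
    omega
  have hwC : wsum ω C = wsum ω (sameSide a) + wsum ω B := by
    rw [← hClow]
    conv_lhs => rw [hCsplit]
    exact Finset.sum_union hdisj1
  have hwC' : wsum ω (A ∪ B) = wsum ω (otherSide a) + wsum ω B := by
    rw [← hA_eq]
    exact Finset.sum_union hdisjAB
  have hlt : wsum ω (A ∪ B) < wsum ω C := by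
    rw [hwC, hwC']
    have : wsum ω (otherSide a) < wsum ω (sameSide a) := by
      unfold CoverCond at hncc; linarith [not_le.mp hncc]
    linarith
  have hcover : IsCoverOn 0 n (A ∪ B) := by
    constructor
    · intro j hj
      rcases mem_union.mp hj with h | h
      · simp only [hAdef, mem_filter, mem_range] at h
        exact ⟨Nat.zero_le _, by omega⟩
      · simp only [hBdef, mem_filter] at h
        exact ⟨Nat.zero_le _, (hCb j h.1).2⟩
    · intro i _ hi
      rcases lt_trichotomy i a with hlt' | heq | hgt
      · by_cases hp : i % 2 = (a + 1) % 2
        · exact Or.inl (mem_union_left _ (mem_filter.mpr ⟨mem_range.mpr hlt', hp⟩))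
        · have h1 : (i + 1) % 2 = (a + 1) % 2 := by omega
          have h2 : i + 1 < a := by omega
          exact Or.inr (mem_union_left _ (mem_filter.mpr ⟨mem_range.mpr h2, h1⟩))
      · subst heq
        exact Or.inr (mem_union_right _ (mem_filter.mpr ⟨ha1C, le_refl _⟩))
      · rcases hCe i (Nat.zero_le _) hi with h | h
        · exact Or.inl (mem_union_right _ (mem_filter.mpr ⟨h, by omega⟩))
        · exact Or.inr (mem_union_right _ (mem_filter.mpr ⟨h, by omega⟩))
  refine ⟨hcover, hlt, ?_⟩
  rintro ⟨_, hmin⟩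
  exact absurd (hmin _ hcover) (not_le.mpr hlt)
end

section
/- In Stackelberg Vertex Cover on a path, let p ∈ Pr be a priceable vertex, π : Pr → ℝ a pricing, x ≥ π(p), and let π' := π[p ↦ x] be the pricing agreeing with π except that p gets price x. If some minimum weight vertex cover of P w.r.t. w_{π'} contains p, then rev(π') ≥ rev(π) + (x − π(p)). In particular, choosing a price for p strictly below a value at which p is still contained in a minimum weight vertex cover strictly reduces the leader's revenue. -/
open Finset

/-- The weights induced on the vertices by the pricing `π` on the priceable vertices `Pr`
and the fixed weights `ω` on the fixed-price vertices. -/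
def wpr (Pr : Finset ℕ) (ω π : ℕ → ℝ) : ℕ → ℝ := fun v => if v ∈ Pr then π v else ω v

/-- The leader's revenue under the pricing `π`: the maximum, over all minimum weight vertex
covers `C` of the path w.r.t. the induced weights, of `∑_{p ∈ C ∩ Pr} π(p)`
(the follower breaks ties in favor of the leader). -/
noncomputable def rev (n : ℕ) (Pr : Finset ℕ) (ω π : ℕ → ℝ) : ℝ :=
  sSup { r : ℝ | ∃ C : Finset ℕ, IsMWVCOn (wpr Pr ω π) 0 n C ∧ r = ∑ p ∈ C ∩ Pr, π p }

/-- In StackVC on a path (no two priceable vertices adjacent), let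
`p ∈ Pr`, `x ≥ π(p)`, and `π' = π[p ↦ x]`. If some MWVC w.r.t. `w_{π'}` contains `p`,
then `rev(π') ≥ rev(π) + (x − π(p))`. -/
theorem stmt_13 (n : ℕ) (Pr : Finset ℕ) (hPrn : ∀ q ∈ Pr, q < n)
    (hNoAdj : ∀ q ∈ Pr, q + 1 ∉ Pr)
    (ω : ℕ → ℝ) (hω : ∀ v : ℕ, v ∉ Pr → 0 ≤ ω v)
    (p : ℕ) (hp : p ∈ Pr) (π : ℕ → ℝ) (x : ℝ) (hx : π p ≤ x)
    (hin : ∃ C : Finset ℕ,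
      IsMWVCOn (wpr Pr ω (Function.update π p x)) 0 n C ∧ p ∈ C) :
    rev n Pr ω π + (x - π p) ≤ rev n Pr ω (Function.update π p x) := by

  classical
  rcases eq_or_lt_of_le hx with heq | hlt
  · rw [← heq, Function.update_eq_self]
    simp
  · set π' := Function.update π p x with hπ'
    set w := wpr Pr ω π with hw
    set w' := wpr Pr ω π' with hw'
    obtain ⟨C', hC', hpC'⟩ := hin
    have hπdiff : ∀ q, π' q = π q + (if q = p then x - π p else 0) := by
      intro q
      by_cases hq : q = p
      · subst hq; simp [hπ']
      · simp [hπ', Function.update_of_ne hq, hq]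
    have hwdiff : ∀ j, w' j = w j + (if j = p then x - π p else 0) := by
      intro j
      by_cases hj : j = p
      · subst hj; simp [hw, hw', wpr, hp, hπ']
      · by_cases hjPr : j ∈ Pr
        · simp [hw, hw', wpr, hjPr, hπ', Function.update_of_ne hj, hj]
        · simp [hw, hw', wpr, hjPr, hj]
    have hdiff : ∀ C : Finset ℕ,
        wsum w' C = wsum w C + (if p ∈ C then x - π p else 0) := by
      intro C
      unfold wsum
      rw [Finset.sum_congr rfl (fun j _ => hwdiff j), Finset.sum_add_distrib,
        Finset.sum_ite_eq' C p (fun _ => x - π p)]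
    have hrevdiff : ∀ C : Finset ℕ, p ∈ C →
        (∑ q ∈ C ∩ Pr, π' q) = (∑ q ∈ C ∩ Pr, π q) + (x - π p) := by
      intro C hpC
      rw [Finset.sum_congr rfl (fun q _ => hπdiff q), Finset.sum_add_distrib,
        Finset.sum_ite_eq' (C ∩ Pr) p (fun _ => x - π p),
        if_pos (Finset.mem_inter.mpr ⟨hpC, hp⟩)]
    -- every MWVC of w contains p
    have hmem : ∀ C, IsMWVCOn w 0 n C → p ∈ C := by
      intro C hC
      by_contra hpc
      have h1 : wsum w C ≤ wsum w C' := hC.2 C' hC'.1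
      have h2 : wsum w' C' ≤ wsum w' C := hC'.2 C hC.1
      rw [hdiff C', hdiff C, if_pos hpC', if_neg hpc] at h2
      linarith
    -- every MWVC of w is an MWVC of w'
    have hMW : ∀ C, IsMWVCOn w 0 n C → IsMWVCOn w' 0 n C := by
      intro C hC
      refine ⟨hC.1, fun D hD => ?_⟩
      have h2 : wsum w' C' ≤ wsum w' D := hC'.2 D hD
      have h3 : wsum w' C' ≤ wsum w' C := hC'.2 C hC.1
      have h4 : wsum w C ≤ wsum w C' := hC.2 C' hC'.1
      have e1 := hdiff C
      have e2 := hdiff C'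
      rw [if_pos (hmem C hC)] at e1
      rw [if_pos hpC'] at e2
      linarith
    -- existence of an MWVC of w
    have hex : ∃ C, IsMWVCOn w 0 n C := by
      have hne : ((range n).powerset.filter fun C => IsCoverOn 0 n C).Nonempty := by
        refine ⟨range n, Finset.mem_filter.mpr ⟨Finset.mem_powerset.mpr le_rfl, ?_⟩⟩
        exact ⟨fun j hj => ⟨Nat.zero_le _, Finset.mem_range.mp hj⟩,
          fun i _ h => Or.inl (Finset.mem_range.mpr (by omega))⟩
      obtain ⟨C, hC, hmin⟩ := Finset.exists_min_image _ (wsum w) hne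
      rw [Finset.mem_filter] at hC
      refine ⟨C, hC.2, fun D hD => hmin D ?_⟩
      refine Finset.mem_filter.mpr ⟨Finset.mem_powerset.mpr ?_, hD⟩
      exact fun j hj => Finset.mem_range.mpr (hD.1 j hj).2
    set S : Set ℝ :=
      { r : ℝ | ∃ C : Finset ℕ, IsMWVCOn w 0 n C ∧ r = ∑ q ∈ C ∩ Pr, π q } with hS
    set S' : Set ℝ :=
      { r : ℝ | ∃ C : Finset ℕ, IsMWVCOn w' 0 n C ∧ r = ∑ q ∈ C ∩ Pr, π' q } with hS'
    have hSne : S.Nonempty := by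
      obtain ⟨C, hC⟩ := hex
      exact ⟨_, C, hC, rfl⟩
    have hS'bdd : BddAbove S' := by
      have hsub : S' ⊆ ↑((range n).powerset.image fun C => ∑ q ∈ C ∩ Pr, π' q) := by
        rintro r ⟨C, hC, rfl⟩
        refine Finset.mem_coe.mpr (Finset.mem_image.mpr ⟨C, ?_, rfl⟩)
        exact Finset.mem_powerset.mpr fun j hj => Finset.mem_range.mpr (hC.1.1 j hj).2
      exact ((Finset.finite_toSet _).subset hsub).bddAbove
    have hstep : ∀ r ∈ S, r + (x - π p) ≤ sSup S' := by
      rintro r ⟨C, hC, rfl⟩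
      have hmemS' : (∑ q ∈ C ∩ Pr, π q) + (x - π p) ∈ S' :=
        ⟨C, hMW C hC, (hrevdiff C (hmem C hC)).symm⟩
      exact le_csSup hS'bdd hmemS'
    have : sSup S ≤ sSup S' - (x - π p) :=
      csSup_le hSne fun r hr => by linarith [hstep r hr]
    show sSup S + (x - π p) ≤ sSup S'
    linarith
end

section
/- In Stackelberg Vertex Cover on a path, let p ∈ Pr be a priceable vertex and π : Pr → ℝ a pricing such that some minimum weight vertex cover of P w.r.t. w_π does not contain p. Then for every x ≥ π(p), rev(π[p ↦ x]) ≤ rev(π); i.e., raising the price of p beyond a value at which the follower can already exclude p cannot improve the leader's revenue. -/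
open Finset

/-- In StackVC on a path (no two priceable vertices adjacent), if some
MWVC w.r.t. `w_π` does not contain the priceable vertex `p`, then raising the price of `p`
cannot improve the leader's revenue: `rev(π[p ↦ x]) ≤ rev(π)` for every `x ≥ π(p)`. -/
theorem stmt_14 (n : ℕ) (Pr : Finset ℕ) (hPrn : ∀ q ∈ Pr, q < n)
    (hNoAdj : ∀ q ∈ Pr, q + 1 ∉ Pr)
    (ω : ℕ → ℝ) (hω : ∀ v : ℕ, v ∉ Pr → 0 ≤ ω v)
    (p : ℕ) (hp : p ∈ Pr) (π : ℕ → ℝ)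
    (hout : ∃ C : Finset ℕ, IsMWVCOn (wpr Pr ω π) 0 n C ∧ p ∉ C) :
    ∀ x : ℝ, π p ≤ x → rev n Pr ω (Function.update π p x) ≤ rev n Pr ω π := by
  intro x hx
  rcases eq_or_lt_of_le hx with heq | hlt
  · rw [← heq, Function.update_eq_self]
  obtain ⟨C₀, hC₀, hpC₀⟩ := hout
  set w := wpr Pr ω π with hw
  set w' := wpr Pr ω (Function.update π p x) with hw'
  have hww' : ∀ v, w v ≤ w' v := by
    intro v
    simp only [hw, hw', wpr]
    split_ifs with h
    · rcases eq_or_ne v p with rfl | hv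
      · rw [Function.update_self]; exact hx
      · rw [Function.update_of_ne hv]
    · exact le_refl _
  have hsum : ∀ D : Finset ℕ, wsum w D ≤ wsum w' D :=
    fun D => Finset.sum_le_sum fun i _ => hww' i
  have heqsum : ∀ D : Finset ℕ, p ∉ D → wsum w' D = wsum w D := by
    intro D hpD
    refine Finset.sum_congr rfl fun j hj => ?_
    simp only [hw, hw', wpr]
    split_ifs with h
    · rw [Function.update_of_ne]; rintro rfl; exact hpD hj
    · rfl
  have hC₀eq : wsum w' C₀ = wsum w C₀ := heqsum C₀ hpC₀
  have hC₀' : IsMWVCOn w' 0 n C₀ :=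
    ⟨hC₀.1, fun D hD => by rw [hC₀eq]; exact (hC₀.2 D hD).trans (hsum D)⟩
  apply csSup_le_csSup
  · refine ⟨wsum w C₀, ?_⟩
    rintro r ⟨C, hC, rfl⟩
    have h1 : wsum w C ≤ wsum w C₀ := hC.2 C₀ hC₀.1
    have h2 : ∑ q ∈ C ∩ Pr, π q = wsum w (C ∩ Pr) := by
      refine Finset.sum_congr rfl fun q hq => ?_
      simp only [hw, wpr]
      rw [if_pos (Finset.mem_inter.mp hq).2]
    rw [h2]
    refine le_trans ?_ h1
    apply Finset.sum_le_sum_of_subset_of_nonneg Finset.inter_subset_left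
    intro i hi hni
    have hiPr : i ∉ Pr := fun hiPr => hni (Finset.mem_inter.mpr ⟨hi, hiPr⟩)
    simp only [hw, wpr]
    rw [if_neg hiPr]
    exact hω i hiPr
  · exact ⟨_, C₀, hC₀', rfl⟩
  · rintro r ⟨C', hC', rfl⟩
    have hpC' : p ∉ C' := by
      intro hpC'
      have h1 : wsum w C' < wsum w' C' := by
        refine Finset.sum_lt_sum (fun i _ => hww' i) ⟨p, hpC', ?_⟩
        simp only [hw, hw', wpr, if_pos hp, Function.update_self]
        exact hlt
      have h2 : wsum w' C' ≤ wsum w' C₀ := hC'.2 C₀ hC₀.1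
      have h3 : wsum w C₀ ≤ wsum w C' := hC₀.2 C' hC'.1
      linarith
    have hCeq : wsum w' C' = wsum w C' := heqsum C' hpC'
    refine ⟨C', ⟨hC'.1, fun D hD => ?_⟩, ?_⟩
    · calc wsum w C' = wsum w' C' := hCeq.symm
        _ ≤ wsum w' C₀ := hC'.2 C₀ hC₀.1
        _ = wsum w C₀ := hC₀eq
        _ ≤ wsum w D := hC₀.2 D hD
    · refine Finset.sum_congr rfl fun q hq => ?_
      rw [Function.update_of_ne]
      rintro rfl
      exact hpC' (Finset.mem_inter.mp hq).1
end

section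
/- Let P = (v_1, …, v_n) be a path with vertex weights ω : V → ℝ and let u = v_j with 2 ≤ j ≤ n−1 be an interior vertex such that no minimum weight vertex cover of P contains u. Then every minimum weight vertex cover of P contains both neighbors v_{j−1} and v_{j+1}, and the minimum vertex-cover weight of P equals the minimum vertex-cover weight of the subpath (v_1, …, v_{j−2}) plus ω(v_{j−1}) + ω(v_{j+1}) plus the minimum vertex-cover weight of the subpath (v_{j+2}, …, v_n) (where the minimum cover weight of an empty subpath is 0). -/
open Finset

/-- Let `v_m` (an interior vertex, `1 ≤ m ≤ n-2`, 0-indexed) be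
contained in no MWVC of the path. Then every MWVC contains both neighbors `v_{m-1}` and
`v_{m+1}`, and the minimum cover weight of the path equals the minimum cover weight of
the prefix `(v_0, …, v_{m-2})` plus `ω(v_{m-1}) + ω(v_{m+1})` plus the minimum cover
weight of the suffix `(v_{m+2}, …, v_{n-1})`. -/
theorem stmt_15 (n m : ℕ) (ω : ℕ → ℝ) (hm1 : 1 ≤ m) (hm2 : m + 1 < n)
    (hout : ∀ C : Finset ℕ, IsMWVCOn ω 0 n C → m ∉ C) :
    (∀ C : Finset ℕ, IsMWVCOn ω 0 n C → (m - 1 ∈ C ∧ m + 1 ∈ C)) ∧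
      (∀ C C₁ C₂ : Finset ℕ, IsMWVCOn ω 0 n C → IsMWVCOn ω 0 (m - 1) C₁ →
        IsMWVCOn ω (m + 2) n C₂ →
        wsum ω C = wsum ω C₁ + (ω (m - 1) + ω (m + 1)) + wsum ω C₂) := by
  have key : ∀ C : Finset ℕ, IsCoverOn 0 n C → m ∉ C → (m - 1 ∈ C ∧ m + 1 ∈ C) := by
    intro C hC hm
    obtain ⟨hmem, hcov⟩ := hC
    have h1 := hcov (m - 1) (Nat.zero_le _) (by omega)
    have h2 := hcov m (Nat.zero_le _) (by omega)
    have e : m - 1 + 1 = m := by omega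
    rw [e] at h1
    exact ⟨by tauto, by tauto⟩
  refine ⟨fun C hC => key C hC.1 (hout C hC), ?_⟩
  intro C C₁ C₂ hC hC₁ hC₂
  have hmC : m ∉ C := hout C hC
  obtain ⟨hma, hmb⟩ := key C hC.1 hmC
  obtain ⟨⟨hCmem, hCcov⟩, hCmin⟩ := hC
  obtain ⟨⟨hC₁mem, hC₁cov⟩, hC₁min⟩ := hC₁
  obtain ⟨⟨hC₂mem, hC₂cov⟩, hC₂min⟩ := hC₂
  -- the restrictions of C
  set A : Finset ℕ := C.filter (fun j => j < m - 1) with hA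
  set B : Finset ℕ := C.filter (fun j => m + 2 ≤ j) with hB
  have hAcov : IsCoverOn 0 (m - 1) A := by
    constructor
    · intro j hj
      simp only [hA, mem_filter] at hj
      exact ⟨Nat.zero_le _, hj.2⟩
    · intro i _ hi
      have := hCcov i (Nat.zero_le _) (by omega)
      simp only [hA, mem_filter]
      rcases this with h | h
      · exact Or.inl ⟨h, by omega⟩
      · exact Or.inr ⟨h, by omega⟩
  have hBcov : IsCoverOn (m + 2) n B := by
    constructor
    · intro j hj
      simp only [hB, mem_filter] at hj
      exact ⟨hj.2, (hCmem j hj.1).2⟩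
    · intro i hi hi'
      have := hCcov i (Nat.zero_le _) hi'
      simp only [hB, mem_filter]
      rcases this with h | h
      · exact Or.inl ⟨h, by omega⟩
      · exact Or.inr ⟨h, by omega⟩
  -- decomposition of wsum C
  have hsplit : wsum ω C = wsum ω A + (ω (m - 1) + ω (m + 1)) + wsum ω B := by
    have hCeq : C = A ∪ (insert (m - 1) (insert (m + 1) B)) := by
      ext j
      simp only [hA, hB, mem_union, mem_insert, mem_filter]
      constructor
      · intro hj
        by_cases h1 : j < m - 1
        · exact Or.inl ⟨hj, h1⟩
        · rcases Nat.lt_or_ge j (m + 2) with h2 | h2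
          · have : j = m - 1 ∨ j = m ∨ j = m + 1 := by omega
            rcases this with h | h | h
            · exact Or.inr (Or.inl h)
            · exact absurd (h ▸ hj) hmC
            · exact Or.inr (Or.inr (Or.inl h))
          · exact Or.inr (Or.inr (Or.inr ⟨hj, h2⟩))
      · rintro (⟨hj, _⟩ | h | h | ⟨hj, _⟩)
        · exact hj
        · subst h; exact hma
        · subst h; exact hmb
        · exact hj
    rw [hCeq]
    have hd1 : Disjoint A (insert (m - 1) (insert (m + 1) B)) := by
      simp only [disjoint_left, hA, hB, mem_filter, mem_insert]
      rintro j ⟨_, hj⟩ (h | h | ⟨_, h⟩) <;> omega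
    have h2 : (m - 1 : ℕ) ∉ insert (m + 1) B := by
      simp only [mem_insert, hB, mem_filter]; omega
    have h3 : (m + 1 : ℕ) ∉ B := by simp only [hB, mem_filter]; omega
    rw [wsum, Finset.sum_union hd1, Finset.sum_insert h2, Finset.sum_insert h3]
    simp [wsum]; ring
  -- the glued cover
  set D : Finset ℕ := insert (m - 1) (insert (m + 1) (C₁ ∪ C₂)) with hD
  have hDcov : IsCoverOn 0 n D := by
    constructor
    · intro j hj
      simp only [hD, mem_insert, mem_union] at hj
      rcases hj with h | h | h | h
      · omega
      · omega
      · have := hC₁mem j h; omega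
      · exact ⟨Nat.zero_le _, (hC₂mem j h).2⟩
    · intro i _ hi
      simp only [hD, mem_insert, mem_union]
      rcases Nat.lt_or_ge (i + 1) (m - 1) with h1 | h1
      · rcases hC₁cov i (Nat.zero_le _) h1 with h | h
        · exact Or.inl (Or.inr (Or.inr (Or.inl h)))
        · exact Or.inr (Or.inr (Or.inr (Or.inl h)))
      · rcases Nat.lt_or_ge i (m + 2) with h2 | h2
        · have : i = m - 1 ∨ i + 1 = m - 1 ∨ i = m + 1 ∨ i + 1 = m + 1 := by omega
          rcases this with h | h | h | h
          · exact Or.inl (Or.inl h)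
          · exact Or.inr (Or.inl h)
          · exact Or.inl (Or.inr (Or.inl h))
          · exact Or.inr (Or.inr (Or.inl h))
        · rcases hC₂cov i h2 hi with h | h
          · exact Or.inl (Or.inr (Or.inr (Or.inr h)))
          · exact Or.inr (Or.inr (Or.inr (Or.inr h)))
  have hDsum : wsum ω D = wsum ω C₁ + (ω (m - 1) + ω (m + 1)) + wsum ω C₂ := by
    have h2 : (m - 1 : ℕ) ∉ insert (m + 1) (C₁ ∪ C₂) := by
      simp only [mem_insert, mem_union]
      rintro (h | h | h)
      · omega
      · have := hC₁mem _ h; omega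
      · have := hC₂mem _ h; omega
    have h3 : (m + 1 : ℕ) ∉ C₁ ∪ C₂ := by
      simp only [mem_union]
      rintro (h | h)
      · have := hC₁mem _ h; omega
      · have := hC₂mem _ h; omega
    have hd : Disjoint C₁ C₂ := by
      simp only [disjoint_left]
      intro j h1 h2
      have := hC₁mem _ h1; have := hC₂mem _ h2; omega
    rw [hD, wsum, Finset.sum_insert h2, Finset.sum_insert h3, Finset.sum_union hd]
    simp [wsum]; ring
  have le1 : wsum ω C ≤ wsum ω C₁ + (ω (m - 1) + ω (m + 1)) + wsum ω C₂ := by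
    calc wsum ω C ≤ wsum ω D := hCmin D hDcov
    _ = _ := hDsum
  have le2 : wsum ω C₁ + (ω (m - 1) + ω (m + 1)) + wsum ω C₂ ≤ wsum ω C := by
    have g1 : wsum ω C₁ ≤ wsum ω A := hC₁min A hAcov
    have g2 : wsum ω C₂ ≤ wsum ω B := hC₂min B hBcov
    rw [hsplit]; linarith
  linarith
end

section
/- In Stackelberg Vertex Cover on a path in which no two priceable vertices are adjacent, an optimal pricing exists: the supremum over all pricings π : Pr → ℝ of the leader's revenue rev(π) is finite and is attained by some pricing π*, i.e., there exists π* with rev(π*) = sup_{π} rev(π). -/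
open Finset

section Aux
variable (n : ℕ) (Pr : Finset ℕ) (ω : ℕ → ℝ)

lemma coverOn_range : IsCoverOn 0 n (range n) :=
  ⟨fun j hj => ⟨Nat.zero_le _, mem_range.1 hj⟩, fun i _ h => Or.inl (mem_range.2 (by omega))⟩

lemma cover_subset_range {C : Finset ℕ} (h : IsCoverOn 0 n C) : C ⊆ range n :=
  fun j hj => mem_range.2 (h.1 j hj).2

lemma cover_insert {C : Finset ℕ} (h : IsCoverOn 0 n C) {v : ℕ} (hv : v < n) :
    IsCoverOn 0 n (insert v C) := by
  constructor
  · intro j hj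
    rcases Finset.mem_insert.1 hj with rfl | hj
    · exact ⟨Nat.zero_le _, hv⟩
    · exact h.1 j hj
  · intro i hi hi1
    exact (h.2 i hi hi1).imp (Finset.mem_insert_of_mem) (Finset.mem_insert_of_mem)

lemma cover_union {C E : Finset ℕ} (h : IsCoverOn 0 n C) (hE : ∀ j ∈ E, j < n) :
    IsCoverOn 0 n (C ∪ E) := by
  constructor
  · intro j hj
    rcases Finset.mem_union.1 hj with hj | hj
    · exact h.1 j hj
    · exact ⟨Nat.zero_le _, hE j hj⟩
  · intro i hi hi1
    exact (h.2 i hi hi1).imp (fun h' => Finset.mem_union_left _ h')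
      (fun h' => Finset.mem_union_left _ h')

lemma exists_mwvc (w : ℕ → ℝ) : ∃ C, IsMWVCOn w 0 n C := by
  classical
  obtain ⟨C, hC, hmin⟩ := Finset.exists_min_image
    ((range n).powerset.filter (fun C => IsCoverOn 0 n C)) (wsum w)
    ⟨range n, by simp [coverOn_range n]⟩
  refine ⟨C, (Finset.mem_filter.1 hC).2, fun D hD => hmin D ?_⟩
  exact Finset.mem_filter.2 ⟨Finset.mem_powerset.2 (cover_subset_range n hD), hD⟩

lemma revSet_finite (π : ℕ → ℝ) :
    {r : ℝ | ∃ C : Finset ℕ, IsMWVCOn (wpr Pr ω π) 0 n C ∧ r = ∑ p ∈ C ∩ Pr, π p}.Finite := by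
  have h1 : ({C : Finset ℕ | C ⊆ range n}).Finite :=
    Set.Finite.subset (Finset.finite_toSet ((range n).powerset))
      (fun C hC => Finset.mem_coe.2 (Finset.mem_powerset.2 hC))
  apply (h1.image (fun C => ∑ p ∈ C ∩ Pr, π p)).subset
  rintro r ⟨C, hC, rfl⟩
  exact ⟨C, cover_subset_range n hC.1, rfl⟩

lemma rev_spec (π : ℕ → ℝ) :
    ∃ C : Finset ℕ, IsMWVCOn (wpr Pr ω π) 0 n C ∧ rev n Pr ω π = ∑ p ∈ C ∩ Pr, π p := by
  have hne : {r : ℝ | ∃ C, IsMWVCOn (wpr Pr ω π) 0 n C ∧ r = ∑ p ∈ C ∩ Pr, π p}.Nonempty := by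
    obtain ⟨C, hC⟩ := exists_mwvc n (wpr Pr ω π)
    exact ⟨_, C, hC, rfl⟩
  exact hne.csSup_mem (revSet_finite n Pr ω π)

lemma le_rev {π : ℕ → ℝ} {C : Finset ℕ} (hC : IsMWVCOn (wpr Pr ω π) 0 n C) :
    (∑ p ∈ C ∩ Pr, π p) ≤ rev n Pr ω π :=
  le_csSup ((revSet_finite n Pr ω π).bddAbove) ⟨C, hC, rfl⟩

def fixedC : Finset ℕ := (range n).filter (fun v => v ∉ Pr)

noncomputable def Wbd : ℝ := wsum ω (fixedC n Pr)

lemma fixedC_cover (hNoAdj : ∀ q ∈ Pr, q + 1 ∉ Pr) : IsCoverOn 0 n (fixedC n Pr) := by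
  constructor
  · intro j hj; exact ⟨Nat.zero_le _, mem_range.1 (mem_filter.1 hj).1⟩
  · intro i _ h
    by_cases hi : i ∈ Pr
    · exact Or.inr (mem_filter.2 ⟨mem_range.2 (by omega), hNoAdj i hi⟩)
    · exact Or.inl (mem_filter.2 ⟨mem_range.2 (by omega), hi⟩)

lemma wpr_fixedC (π : ℕ → ℝ) : wsum (wpr Pr ω π) (fixedC n Pr) = Wbd n Pr ω := by
  unfold Wbd wsum
  refine Finset.sum_congr rfl fun v hv => ?_
  have hv' : v ∉ Pr := (mem_filter.1 hv).2
  simp [wpr, hv']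

lemma Wbd_nonneg (hω : ∀ v ∉ Pr, 0 ≤ ω v) : 0 ≤ Wbd n Pr ω := by
  unfold Wbd wsum fixedC
  exact Finset.sum_nonneg fun v hv => hω v (mem_filter.1 hv).2

lemma mwvc_wsum_le (hNoAdj : ∀ q ∈ Pr, q + 1 ∉ Pr) {π : ℕ → ℝ} {C : Finset ℕ}
    (hC : IsMWVCOn (wpr Pr ω π) 0 n C) :
    wsum (wpr Pr ω π) C ≤ Wbd n Pr ω := by
  have := hC.2 _ (fixedC_cover n Pr hNoAdj)
  rwa [wpr_fixedC] at this

lemma wsum_split (w : ℕ → ℝ) (C : Finset ℕ) :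
    wsum w C = (∑ p ∈ C ∩ Pr, w p) + ∑ p ∈ C \ Pr, w p := by
  classical
  have hd : Disjoint (C ∩ Pr) (C \ Pr) :=
    Finset.disjoint_left.2 fun a ha ha' => (Finset.mem_sdiff.1 ha').2 (Finset.mem_inter.1 ha).2
  have hu : (C ∩ Pr) ∪ (C \ Pr) = C := by
    ext j; simp only [Finset.mem_union, Finset.mem_inter, Finset.mem_sdiff]; tauto
  rw [wsum]
  nth_rewrite 1 [← hu]
  rw [Finset.sum_union hd]

lemma rev_le_Wbd (hNoAdj : ∀ q ∈ Pr, q + 1 ∉ Pr) (hω : ∀ v ∉ Pr, 0 ≤ ω v) (π : ℕ → ℝ) :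
    rev n Pr ω π ≤ Wbd n Pr ω := by
  obtain ⟨C, hC, hrev⟩ := rev_spec n Pr ω π
  rw [hrev]
  have h1 : (∑ p ∈ C ∩ Pr, π p) = ∑ p ∈ C ∩ Pr, wpr Pr ω π p :=
    Finset.sum_congr rfl fun p hp => by simp [wpr, (Finset.mem_inter.1 hp).2]
  have h2 : 0 ≤ ∑ p ∈ C \ Pr, wpr Pr ω π p :=
    Finset.sum_nonneg fun p hp => by
      have hp' := (Finset.mem_sdiff.1 hp).2
      simpa [wpr, hp'] using hω p hp'
  have h3 := mwvc_wsum_le n Pr ω hNoAdj hC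
  rw [wsum_split Pr] at h3
  linarith [h1, h2, h3]

/-- Replacing negative prices by `0` does not decrease the revenue. -/
lemma rev_le_pos (hPrn : ∀ q ∈ Pr, q < n) (π : ℕ → ℝ) :
    rev n Pr ω π ≤ rev n Pr ω (fun v => max (π v) 0) := by
  classical
  obtain ⟨C, hC, hrev⟩ := rev_spec n Pr ω π
  set w : ℕ → ℝ := wpr Pr ω π with hw
  set π' : ℕ → ℝ := fun v => max (π v) 0 with hπ'
  set w' : ℕ → ℝ := wpr Pr ω π' with hw'
  set N : Finset ℕ := Pr.filter (fun p => π p < 0) with hN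
  have hNPr : ∀ p ∈ N, p ∈ Pr := fun p hp => (Finset.mem_filter.1 hp).1
  have hNneg : ∀ p ∈ N, π p < 0 := fun p hp => (Finset.mem_filter.1 hp).2
  have hNn : ∀ p ∈ N, p < n := fun p hp => hPrn p (hNPr p hp)
  have hw'N : ∀ p ∈ N, w' p = 0 := by
    intro p hp
    have : π' p = 0 := max_eq_right (le_of_lt (hNneg p hp))
    simp [hw', wpr, hNPr p hp, this]
  have hagree : ∀ v, v ∉ N → w' v = w v := by
    intro v hv
    by_cases hvPr : v ∈ Pr
    · have hvneg : ¬ π v < 0 := fun h => hv (Finset.mem_filter.2 ⟨hvPr, h⟩)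
      have : π' v = π v := max_eq_left (not_lt.1 hvneg)
      simp [hw', hw, wpr, hvPr, this]
    · simp [hw', hw, wpr, hvPr]
  -- N is contained in C
  have hNC : N ⊆ C := by
    intro p hp
    by_contra hpC
    have hcov : IsCoverOn 0 n (insert p C) := cover_insert n hC.1 (hNn p hp)
    have hle := hC.2 _ hcov
    have : wsum w (insert p C) = w p + wsum w C := by
      rw [wsum, Finset.sum_insert hpC]; rfl
    have hwp : w p = π p := by simp [hw, wpr, hNPr p hp]
    have := hNneg p hp
    rw [‹wsum w (insert p C) = _›, hwp] at hle
    linarith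
  -- key identity
  have key : ∀ E : Finset ℕ, N ⊆ E → wsum w' E = wsum w E - ∑ p ∈ N, π p := by
    intro E hNE
    have hEN : E ∩ N = N := Finset.inter_eq_right.2 hNE
    have hd : Disjoint (E \ N) (E ∩ N) :=
      Finset.disjoint_left.2 fun a ha ha' => (Finset.mem_sdiff.1 ha).2 (Finset.mem_inter.1 ha').2
    have hu : (E \ N) ∪ (E ∩ N) = E := by
      ext j; simp only [Finset.mem_union, Finset.mem_inter, Finset.mem_sdiff]; tauto
    have split : ∀ u : ℕ → ℝ, wsum u E = (∑ p ∈ E \ N, u p) + ∑ p ∈ E ∩ N, u p := by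
      intro u
      rw [wsum]
      nth_rewrite 1 [← hu]
      rw [Finset.sum_union hd]
    rw [split w', split w, hEN]
    have e1 : (∑ p ∈ N, w' p) = 0 := Finset.sum_eq_zero hw'N
    have e2 : (∑ p ∈ N, w p) = ∑ p ∈ N, π p :=
      Finset.sum_congr rfl fun p hp => by simp [hw, wpr, hNPr p hp]
    have e3 : (∑ p ∈ E \ N, w' p) = ∑ p ∈ E \ N, w p :=
      Finset.sum_congr rfl fun p hp => hagree p (Finset.mem_sdiff.1 hp).2
    rw [e1, e2, e3]; ring
  -- C is an MWVC for the new weights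
  have hC' : IsMWVCOn w' 0 n C := by
    refine ⟨hC.1, fun D hD => ?_⟩
    have hDN : IsCoverOn 0 n (D ∪ N) := cover_union n hD hNn
    have h1 : wsum w' (D ∪ N) = wsum w (D ∪ N) - ∑ p ∈ N, π p :=
      key _ Finset.subset_union_right
    have h2 : wsum w C ≤ wsum w (D ∪ N) := hC.2 _ hDN
    have h3 : wsum w' C = wsum w C - ∑ p ∈ N, π p := key _ hNC
    -- wsum w' (D ∪ N) = wsum w' D
    have hsplit : wsum w' (D ∪ N) = wsum w' D + ∑ p ∈ N \ D, w' p := by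
      rw [wsum, wsum, ← Finset.union_sdiff_self_eq_union (s := D) (t := N),
        Finset.sum_union Finset.disjoint_sdiff]
    have hz : (∑ p ∈ N \ D, w' p) = 0 :=
      Finset.sum_eq_zero fun p hp => hw'N p (Finset.mem_sdiff.1 hp).1
    rw [hz, add_zero] at hsplit
    linarith
  have hπle : (∑ p ∈ C ∩ Pr, π p) ≤ ∑ p ∈ C ∩ Pr, π' p :=
    Finset.sum_le_sum fun p _ => le_max_left _ _
  calc rev n Pr ω π = ∑ p ∈ C ∩ Pr, π p := hrev
    _ ≤ ∑ p ∈ C ∩ Pr, π' p := hπle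
    _ ≤ rev n Pr ω π' := le_rev n Pr ω hC'

/-- Capping nonnegative prices at `Wbd + 1` does not decrease the revenue. -/
lemma rev_le_cap (hNoAdj : ∀ q ∈ Pr, q + 1 ∉ Pr) (hω : ∀ v ∉ Pr, 0 ≤ ω v)
    (π : ℕ → ℝ) (hπ : ∀ v, 0 ≤ π v) :
    rev n Pr ω π ≤ rev n Pr ω (fun v => min (π v) (Wbd n Pr ω + 1)) := by
  classical
  set B : ℝ := Wbd n Pr ω + 1 with hB
  have hB0 : 0 ≤ B := by have := Wbd_nonneg n Pr ω hω; linarith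
  obtain ⟨C, hC, hrev⟩ := rev_spec n Pr ω π
  set w : ℕ → ℝ := wpr Pr ω π with hw
  set πc : ℕ → ℝ := fun v => min (π v) B with hπc
  set wc : ℕ → ℝ := wpr Pr ω πc with hwc
  set H : Finset ℕ := Pr.filter (fun p => B < π p) with hH
  have hw0 : ∀ v, 0 ≤ w v := by
    intro v; by_cases hv : v ∈ Pr <;> simp [hw, wpr, hv, hπ v, hω v, *]
  have hwc0 : ∀ v, 0 ≤ wc v := by
    intro v; by_cases hv : v ∈ Pr
    · simp only [hwc, wpr, if_pos hv, hπc]; exact le_min (hπ v) hB0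
    · simpa [hwc, wpr, hv] using hω v hv
  have hagree : ∀ v, v ∉ H → wc v = w v := by
    intro v hv
    by_cases hvPr : v ∈ Pr
    · have : ¬ B < π v := fun h => hv (Finset.mem_filter.2 ⟨hvPr, h⟩)
      have : πc v = π v := min_eq_left (not_lt.1 this)
      simp [hwc, hw, wpr, hvPr, this]
    · simp [hwc, hw, wpr, hvPr]
  have hwcH : ∀ p ∈ H, wc p = B := by
    intro p hp
    have h1 := (Finset.mem_filter.1 hp).2
    have : πc p = B := min_eq_right (le_of_lt h1)
    simp [hwc, wpr, (Finset.mem_filter.1 hp).1, this]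
  have hCW : wsum w C ≤ Wbd n Pr ω := mwvc_wsum_le n Pr ω hNoAdj hC
  have hCH : ∀ p ∈ C, p ∉ H := by
    intro p hpC hpH
    have h1 : w p ≤ wsum w C := Finset.single_le_sum (fun i _ => hw0 i) hpC
    have h2 : w p = π p := by simp [hw, wpr, (Finset.mem_filter.1 hpH).1]
    have h3 := (Finset.mem_filter.1 hpH).2
    rw [hB] at h3
    linarith [h1, hCW]
  have hCwc : wsum wc C = wsum w C := by
    rw [wsum, wsum]; exact Finset.sum_congr rfl fun p hp => hagree p (hCH p hp)
  have hC' : IsMWVCOn wc 0 n C := by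
    refine ⟨hC.1, fun D hD => ?_⟩
    by_cases hDH : ∃ p ∈ D, p ∈ H
    · obtain ⟨p, hpD, hpH⟩ := hDH
      have h1 : wc p ≤ wsum wc D := Finset.single_le_sum (fun i _ => hwc0 i) hpD
      rw [hwcH p hpH, hB] at h1
      linarith [hCW, hCwc]
    · push_neg at hDH
      have : wsum wc D = wsum w D := Finset.sum_congr rfl fun p hp => hagree p (hDH p hp)
      rw [hCwc, this]
      exact hC.2 _ hD
  have hsum : (∑ p ∈ C ∩ Pr, π p) = ∑ p ∈ C ∩ Pr, πc p := by
    refine Finset.sum_congr rfl fun p hp => ?_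
    have hpC := (Finset.mem_inter.1 hp).1
    have hpPr := (Finset.mem_inter.1 hp).2
    have : ¬ B < π p := fun h => hCH p hpC (Finset.mem_filter.2 ⟨hpPr, h⟩)
    exact (min_eq_left (not_lt.1 this)).symm
  calc rev n Pr ω π = ∑ p ∈ C ∩ Pr, π p := hrev
    _ = ∑ p ∈ C ∩ Pr, πc p := hsum
    _ ≤ rev n Pr ω πc := le_rev n Pr ω hC'

end Aux

lemma cont_wsum (Pr : Finset ℕ) (ω : ℕ → ℝ) (D : Finset ℕ) :
    Continuous (fun π : ℕ → ℝ => wsum (wpr Pr ω π) D) := by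
  classical
  simp only [wsum, wpr]
  apply continuous_finset_sum
  intro j _
  by_cases hj : j ∈ Pr
  · simp only [if_pos hj]; exact continuous_apply j
  · simp only [if_neg hj]; exact continuous_const

lemma cont_lin (Pr : Finset ℕ) (C : Finset ℕ) :
    Continuous (fun π : ℕ → ℝ => ∑ p ∈ C ∩ Pr, π p) :=
  continuous_finset_sum _ fun p _ => continuous_apply p

lemma closed_mwvc (n : ℕ) (Pr : Finset ℕ) (ω : ℕ → ℝ) (C : Finset ℕ) (hC : IsCoverOn 0 n C) :
    IsClosed {π : ℕ → ℝ | IsMWVCOn (wpr Pr ω π) 0 n C} := by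
  have heq : {π : ℕ → ℝ | IsMWVCOn (wpr Pr ω π) 0 n C} =
      ⋂ D ∈ {D : Finset ℕ | IsCoverOn 0 n D},
        {π : ℕ → ℝ | wsum (wpr Pr ω π) C ≤ wsum (wpr Pr ω π) D} := by
    ext π
    simp only [Set.mem_iInter, Set.mem_setOf_eq]
    exact ⟨fun h D hD => h.2 D hD, fun h => ⟨hC, fun D hD => h D hD⟩⟩
  rw [heq]
  exact isClosed_biInter fun D _ => isClosed_le (cont_wsum Pr ω C) (cont_wsum Pr ω D)


/-- In StackVC on a path in which no two priceable vertices are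
adjacent, an optimal pricing exists: the supremum of the leader's revenue over all
pricings is finite (the range of `rev` is bounded above) and attained by some `π*`. -/
theorem stmt_17 (n : ℕ) (Pr : Finset ℕ) (hPrn : ∀ q ∈ Pr, q < n)
    (hNoAdj : ∀ q ∈ Pr, q + 1 ∉ Pr)
    (ω : ℕ → ℝ) (hω : ∀ v : ℕ, v ∉ Pr → 0 ≤ ω v) :
    BddAbove (Set.range fun π : ℕ → ℝ => rev n Pr ω π) ∧
      ∃ πstar : ℕ → ℝ,
        rev n Pr ω πstar = sSup (Set.range fun π : ℕ → ℝ => rev n Pr ω π) := by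
  classical
  have hub : ∀ π : ℕ → ℝ, rev n Pr ω π ≤ Wbd n Pr ω := rev_le_Wbd n Pr ω hNoAdj hω
  refine ⟨⟨Wbd n Pr ω, ?_⟩, ?_⟩
  · rintro r ⟨π, rfl⟩; exact hub π
  set B : ℝ := Wbd n Pr ω + 1 with hB
  have hB0 : (0:ℝ) ≤ B := by have := Wbd_nonneg n Pr ω hω; linarith
  set K : Set (ℕ → ℝ) := Set.Icc (0 : ℕ → ℝ) (fun _ => B) with hK
  have hKcompact : IsCompact K := isCompact_Icc
  have hclamp : ∀ π : ℕ → ℝ, (fun v => min (max (π v) 0) B) ∈ K ∧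
      rev n Pr ω π ≤ rev n Pr ω (fun v => min (max (π v) 0) B) := by
    intro π
    constructor
    · refine Set.mem_Icc.2 ⟨Pi.le_def.2 fun v => ?_, Pi.le_def.2 fun v => ?_⟩
      · simpa using le_min (le_max_right (π v) 0) hB0
      · exact min_le_right _ _
    · refine le_trans (rev_le_pos n Pr ω hPrn π) ?_
      exact rev_le_cap n Pr ω hNoAdj hω (fun v => max (π v) 0) (fun v => le_max_right _ _)
  set P : Finset ℕ → Set (ℕ → ℝ) := fun C => K ∩ {π | IsMWVCOn (wpr Pr ω π) 0 n C} with hP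
  set S' : Finset (Finset ℕ) := ((range n).powerset.filter (fun C => IsCoverOn 0 n C)).filter
      (fun C => (P C).Nonempty) with hS'
  have hmemS' : ∀ {C : Finset ℕ}, C ∈ S' ↔ IsCoverOn 0 n C ∧ (P C).Nonempty := by
    intro C
    simp only [hS', Finset.mem_filter, Finset.mem_powerset]
    constructor
    · rintro ⟨⟨-, h1⟩, h2⟩; exact ⟨h1, h2⟩
    · rintro ⟨h1, h2⟩; exact ⟨⟨cover_subset_range n h1, h1⟩, h2⟩
  have hmax : ∀ C ∈ S', ∃ πC, πC ∈ P C ∧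
      ∀ π' ∈ P C, (∑ p ∈ C ∩ Pr, π' p) ≤ ∑ p ∈ C ∩ Pr, πC p := by
    intro C hC
    obtain ⟨hcov, hne⟩ := hmemS'.1 hC
    have hclosed := closed_mwvc n Pr ω C hcov
    have hcomp : IsCompact (P C) := hKcompact.inter_right hclosed
    obtain ⟨πC, hπC, hmaxon⟩ := hcomp.exists_isMaxOn hne ((cont_lin Pr C).continuousOn)
    exact ⟨πC, hπC, fun π' hπ' => hmaxon hπ'⟩
  choose g hg1 hg2 using hmax
  have hS'ne : S'.Nonempty := by
    obtain ⟨C, hC⟩ := exists_mwvc n (wpr Pr ω 0)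
    refine ⟨C, hmemS'.2 ⟨hC.1, ⟨0, ⟨?_, hC⟩⟩⟩⟩
    exact Set.mem_Icc.2 ⟨le_refl _, Pi.le_def.2 fun v => by simpa using hB0⟩
  have hattne : S'.attach.Nonempty := by
    obtain ⟨c, hc⟩ := hS'ne; exact ⟨⟨c, hc⟩, Finset.mem_attach _ _⟩
  obtain ⟨C0, _, hC0max⟩ := Finset.exists_max_image S'.attach
      (fun C => rev n Pr ω (g C.1 C.2)) hattne
  have hopt : ∀ π : ℕ → ℝ, rev n Pr ω π ≤ rev n Pr ω (g C0.1 C0.2) := by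
    intro π
    obtain ⟨hmem, hle⟩ := hclamp π
    refine le_trans hle ?_
    set πk : ℕ → ℝ := fun v => min (max (π v) 0) B with hπk
    obtain ⟨C', hC', hrev'⟩ := rev_spec n Pr ω πk
    have hPk : πk ∈ P C' := ⟨hmem, hC'⟩
    have hC'S' : C' ∈ S' := hmemS'.2 ⟨hC'.1, ⟨πk, hPk⟩⟩
    calc rev n Pr ω πk = ∑ p ∈ C' ∩ Pr, πk p := hrev'
      _ ≤ ∑ p ∈ C' ∩ Pr, (g C' hC'S') p := hg2 C' hC'S' πk hPk
      _ ≤ rev n Pr ω (g C' hC'S') := le_rev n Pr ω (hg1 C' hC'S').2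
      _ ≤ rev n Pr ω (g C0.1 C0.2) := hC0max ⟨C', hC'S'⟩ (Finset.mem_attach _ _)
  refine ⟨g C0.1 C0.2, ?_⟩
  have hgr : IsGreatest (Set.range fun π : ℕ → ℝ => rev n Pr ω π) (rev n Pr ω (g C0.1 C0.2)) :=
    ⟨⟨_, rfl⟩, by rintro r ⟨π, rfl⟩; exact hopt π⟩
  exact hgr.csSup_eq.symm
end
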